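/- Let G be a finite p-group such that G has nilpotency class 3 and |G : Z(G)| = |Frat(G)| = p^3. Then |G| / |Soc(G) : Soc(G) ∩ Frat(G)| < p^8. -/

import Mathlib

/-- The socle of a `p`-group: the subgroup generated by central elements of order dividing `p`. -/
def socle (p : ℕ) (G : Type*) [Group G] : Subgroup G :=
  Subgroup.closure {g : G | g ∈ Subgroup.center G ∧ g ^ p = 1}

open Subgroup

section Aux

variable {p : ℕ} [Fact p.Prime] {G : Type*} [Group G] [Finite G]

/-- In a finite `p`-group, every maximal subgroup contains all `p`-th powers and all
commutators. -/
lemma coatom_props (hG : IsPGroup p G) {M : Subgroup G} (hM : IsCoatom M) :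
    (∀ x : G, x ^ p ∈ M) ∧ (∀ a b : G, a * b * a⁻¹ * b⁻¹ ∈ M) := by
  have hnil : Group.IsNilpotent G := hG.isNilpotent
  have hmax : ∀ H : Subgroup G, IsCoatom H → H.Normal :=
    ((isNilpotent_of_finite_tfae (G := G)).out 0 2).mp hnil
  have hN : M.Normal := hmax M hM
  set Q := G ⧸ M with hQdef
  have hsurj : Function.Surjective (QuotientGroup.mk' M) := QuotientGroup.mk'_surjective M
  -- every subgroup of the quotient is trivial or everything
  have hsub : ∀ K : Subgroup Q, K = ⊥ ∨ K = ⊤ := by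
    intro K
    have hle : M ≤ K.comap (QuotientGroup.mk' M) := by
      intro m hm
      have h1 : QuotientGroup.mk' M m = 1 := (QuotientGroup.eq_one_iff m).mpr hm
      simp only [Subgroup.mem_comap, h1]
      exact K.one_mem
    rcases eq_or_lt_of_le hle with heq | hlt
    · left
      rw [eq_bot_iff]
      intro x hx
      obtain ⟨g, rfl⟩ := hsurj x
      have hg : g ∈ K.comap (QuotientGroup.mk' M) := hx
      rw [← heq] at hg
      exact Subgroup.mem_bot.mpr ((QuotientGroup.eq_one_iff g).mpr hg)
    · right
      have htop := hM.2 _ hlt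
      rw [eq_top_iff]
      intro x _
      obtain ⟨g, rfl⟩ := hsurj x
      have : g ∈ K.comap (QuotientGroup.mk' M) := htop ▸ Subgroup.mem_top g
      exact this
  have hQp : IsPGroup p Q := hG.to_quotient M
  have hnt : Nontrivial Q := by
    obtain ⟨g, hg⟩ := SetLike.exists_of_lt (lt_top_iff_ne_top.mpr hM.1)
    exact ⟨⟨(g : Q), 1, fun h => hg.2 ((QuotientGroup.eq_one_iff g).mp h)⟩⟩
  have hp1 : 1 < p := (Fact.out (p := p.Prime)).one_lt
  -- exponent p
  have hexp : ∀ y : Q, y ^ p = 1 := by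
    intro y
    rcases hsub (zpowers (y ^ p)) with h | h
    · exact Subgroup.mem_bot.mp (h ▸ Subgroup.mem_zpowers _)
    · exfalso
      have hyt : zpowers y = ⊤ := by
        rw [eq_top_iff, ← h]
        exact zpowers_le.mpr (mem_zpowers_iff.mpr ⟨(p : ℤ), by rw [zpow_natCast]⟩)
      have ho1 : orderOf y = Nat.card Q :=
        orderOf_eq_card_of_forall_mem_zpowers (fun x => hyt ▸ Subgroup.mem_top x)
      have ho2 : orderOf (y ^ p) = Nat.card Q :=
        orderOf_eq_card_of_forall_mem_zpowers (fun x => h ▸ Subgroup.mem_top x)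
      obtain ⟨n, hn0, hn⟩ := hQp.nontrivial_iff_card.mp hnt
      have hdvd : p ∣ orderOf y := by
        rw [ho1, hn]
        exact dvd_pow_self p hn0.ne'
      have hkey := orderOf_pow_of_dvd (by omega : p ≠ 0) hdvd
      rw [ho1, ho2] at hkey
      have hcard : 0 < Nat.card Q := Nat.card_pos
      have hlt := Nat.div_lt_self hcard hp1
      omega
  -- the quotient is cyclic, hence commutative
  have hcomm : ∀ a b : Q, a * b = b * a := by
    obtain ⟨y, hy⟩ := exists_ne (1 : Q)
    have hyt : zpowers y = ⊤ := by
      rcases hsub (zpowers y) with h | h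
      · exact absurd (Subgroup.mem_bot.mp (h ▸ Subgroup.mem_zpowers y)) hy
      · exact h
    intro a b
    obtain ⟨i, rfl⟩ := mem_zpowers_iff.mp (hyt ▸ Subgroup.mem_top a)
    obtain ⟨j, rfl⟩ := mem_zpowers_iff.mp (hyt ▸ Subgroup.mem_top b)
    rw [← zpow_add, ← zpow_add, add_comm]
  constructor
  · intro x
    rw [← QuotientGroup.eq_one_iff, QuotientGroup.mk_pow]
    exact hexp ((x : Q))
  · intro a b
    rw [← QuotientGroup.eq_one_iff, QuotientGroup.mk_mul, QuotientGroup.mk_mul,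
      QuotientGroup.mk_mul, QuotientGroup.mk_inv, QuotientGroup.mk_inv,
      hcomm ((a : G) : Q) ((b : G) : Q)]
    group

lemma pow_mem_frattini (hG : IsPGroup p G) (x : G) : x ^ p ∈ frattini G := by
  rw [frattini, Order.radical]
  simp only [Subgroup.mem_iInf]
  intro M hM
  exact (coatom_props hG hM).1 x

lemma comm_mem_frattini (hG : IsPGroup p G) (a b : G) :
    a * b * a⁻¹ * b⁻¹ ∈ frattini G := by
  rw [frattini, Order.radical]
  simp only [Subgroup.mem_iInf]
  intro M hM
  exact (coatom_props hG hM).2 a b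

end Aux

theorem socle_index_bound_class_three
    (p : ℕ) [Fact p.Prime] (G : Type*) [Group G] [Finite G] (hG : IsPGroup p G) [Group.IsNilpotent G]
    (hclass : Group.nilpotencyClass G = 3)
    (hZ : (Subgroup.center G).index = p ^ 3)
    (hF : Nat.card ↥(frattini G) = p ^ 3) :
    Nat.card G / (Nat.card ↥(socle p G) / Nat.card ↥(socle p G ⊓ frattini G)) < p ^ 8 := by
  have hp : p.Prime := Fact.out
  set Z := Subgroup.center G with hZdef
  -- the p-th power map on the (commutative) center
  open scoped IsMulCommutative in
  set φ : ↥Z →* ↥Z := powMonoidHom p with hφdef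
  -- socle = image of the kernel of φ
  have hS : socle p G = Subgroup.map Z.subtype φ.ker := by
    apply le_antisymm
    · rw [socle, Subgroup.closure_le]
      rintro g ⟨hg1, hg2⟩
      exact ⟨⟨g, hg1⟩, by simp [hφdef, MonoidHom.mem_ker, powMonoidHom_apply, Subtype.ext_iff,
        hg2], rfl⟩
    · rintro g ⟨⟨z, hz⟩, hker, rfl⟩
      apply Subgroup.subset_closure
      refine ⟨hz, ?_⟩
      have : (⟨z, hz⟩ : ↥Z) ^ p = 1 := hker
      simpa [Subtype.ext_iff] using this
  -- image of the range of φ lies in Z ⊓ frattini G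
  have hR : Subgroup.map Z.subtype φ.range ≤ Z ⊓ frattini G := by
    rintro g ⟨y, ⟨w, rfl⟩, rfl⟩
    refine ⟨(φ w).2, ?_⟩
    have : ((φ w : ↥Z) : G) = (w : G) ^ p := by
      simp [hφdef, powMonoidHom_apply]
    rw [Subgroup.coe_subtype, this]
    exact pow_mem_frattini hG _
  -- frattini is not contained in the center (class 3)
  have hnotle : ¬ frattini G ≤ Z := by
    intro hle
    have h2 : Subgroup.upperCentralSeries G 2 = ⊤ := by
      rw [eq_top_iff]
      intro x _
      have : x ∈ Subgroup.upperCentralSeries G (1 + 1) := by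
        rw [Subgroup.mem_upperCentralSeries_succ_iff]
        intro y
        rw [Subgroup.upperCentralSeries_one]
        exact hle (comm_mem_frattini hG x y)
      exact this
    have := Subgroup.upperCentralSeries_eq_top_iff_nilpotencyClass_le.mp h2
    omega
  -- |Z ⊓ frattini G| ≤ p ^ 2
  have hZFle : Nat.card ↥(Z ⊓ frattini G) ≤ p ^ 2 := by
    have hdvd : Nat.card ↥(Z ⊓ frattini G) ∣ p ^ 3 :=
      hF ▸ Subgroup.card_dvd_of_le inf_le_right
    have hne : Nat.card ↥(Z ⊓ frattini G) ≠ p ^ 3 := by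
      intro h
      have : Z ⊓ frattini G = frattini G :=
        Subgroup.eq_of_le_of_card_ge inf_le_right (by rw [h, hF])
      exact hnotle (this ▸ inf_le_left)
    obtain ⟨m, hm, heq⟩ := (Nat.dvd_prime_pow hp).mp hdvd
    have hm2 : m ≤ 2 := by
      rcases Nat.lt_or_ge m 3 with h | h
      · omega
      · exfalso; apply hne; rw [heq]; congr 1; omega
    rw [heq]
    exact Nat.pow_le_pow_right hp.pos hm2
  -- cardinalities
  have cardmap : ∀ K : Subgroup ↥Z, Nat.card ↥(Subgroup.map Z.subtype K) = Nat.card ↥K :=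
    fun K => (Nat.card_congr (Subgroup.equivMapOfInjective K Z.subtype
      Z.subtype_injective).toEquiv).symm
  set s := Nat.card ↥(socle p G) with hsdef
  set nn := Nat.card ↥(socle p G ⊓ frattini G) with hndef
  set r := Nat.card ↥φ.range with hrdef
  have hs_ker : s = Nat.card ↥φ.ker := by rw [hsdef, hS, cardmap]
  -- |Z| = s * r
  have hZcard : Nat.card ↥Z = s * r := by
    have h1 := Subgroup.card_eq_card_quotient_mul_card_subgroup φ.ker
    have h2 : Nat.card (↥Z ⧸ φ.ker) = r :=
      Nat.card_congr (QuotientGroup.quotientKerEquivRange φ).toEquiv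
    rw [h1, h2, hs_ker, mul_comm]
  -- |G| = p^3 * |Z|
  have hGcard : Nat.card G = p ^ 3 * Nat.card ↥Z := by
    rw [← Subgroup.index_mul_card Z, hZ]
  -- socle ≤ Z
  have hSZ : socle p G ≤ Z := by
    rw [hS]; exact Subgroup.map_subtype_le _
  -- nn ≤ p^2 and r ≤ p^2
  have hZFpos : 0 < Nat.card ↥(Z ⊓ frattini G) := Nat.card_pos
  have hnle : nn ≤ p ^ 2 := by
    have : socle p G ⊓ frattini G ≤ Z ⊓ frattini G := inf_le_inf_right _ hSZ
    exact le_trans (Nat.le_of_dvd hZFpos (Subgroup.card_dvd_of_le this)) hZFle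
  have hrle : r ≤ p ^ 2 := by
    have : r ≤ Nat.card ↥(Z ⊓ frattini G) := by
      rw [hrdef, ← cardmap φ.range]
      exact Nat.le_of_dvd hZFpos (Subgroup.card_dvd_of_le hR)
    exact le_trans this hZFle
  -- nn divides s
  have hnpos : 0 < nn := Nat.card_pos
  have hspos : 0 < s := Nat.card_pos
  obtain ⟨t, ht⟩ : nn ∣ s := Subgroup.card_dvd_of_le inf_le_left
  have htpos : 0 < t := by
    rcases Nat.eq_zero_or_pos t with h | h
    · rw [h, mul_zero] at ht; omega
    · exact h
  have hdivt : s / nn = t := by rw [ht, Nat.mul_div_cancel_left _ hnpos]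
  rw [hdivt, hGcard, hZcard, ht]
  have : p ^ 3 * (nn * t * r) / t = p ^ 3 * nn * r := by
    rw [show p ^ 3 * (nn * t * r) = (p ^ 3 * nn * r) * t by ring,
      Nat.mul_div_cancel _ htpos]
  rw [this]
  calc p ^ 3 * nn * r ≤ p ^ 3 * p ^ 2 * p ^ 2 := by
        exact Nat.mul_le_mul (Nat.mul_le_mul_left _ hnle) hrle
    _ = p ^ 7 := by ring
    _ < p ^ 8 := Nat.pow_lt_pow_right hp.one_lt (by norm_num)
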